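/- For n ≥ 1 and k ≥ 1, the number of tuples (a_1,...,a_n) of natural numbers with sum n·k and each a_i ≤ k(n-1) equals C(n(k+1)-1, n-1) - n·C(n+k-2, n-1). -/

import Mathlib

open Finset

lemma card_piAntidiag_univ_fin (n m : ℕ) :
    (Finset.piAntidiag (univ : Finset (Fin n)) m).card = (n + m - 1).choose m := by
  rw [← Finset.map_sym_eq_piAntidiag, Finset.card_map, Finset.sym_univ, Finset.card_univ,
    Sym.card_sym_eq_choose, Fintype.card_fin]

lemma key_count (n k : ℕ) (hn : 1 ≤ n) (hk : 1 ≤ k) :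
    ((Finset.piAntidiag (univ : Finset (Fin n)) (n * k)).filter
        (fun a => ∀ i, a i ≤ k * (n - 1))).card
      + n * ((n + k - 2).choose (n - 1)) = (n * (k + 1) - 1).choose (n - 1) := by
  classical
  set c := k * (n - 1) with hc
  have hck : c + k = n * k := by
    obtain ⟨m, rfl⟩ := Nat.exists_eq_add_of_le hn
    simp only [hc, Nat.add_sub_cancel_left]
    ring
  set T := Finset.piAntidiag (univ : Finset (Fin n)) (n * k) with hT
  set B : Fin n → Finset (Fin n → ℕ) := fun i => T.filter (fun a => c < a i) with hB
  clear_value c T B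
  have hBmem : ∀ (i : Fin n) (a : Fin n → ℕ), a ∈ B i ↔ a ∈ T ∧ c < a i := by
    intro i a; rw [hB]; exact Finset.mem_filter
  -- sum bound for membership in two bad sets
  have hsum_two : ∀ (a : Fin n → ℕ), a ∈ T → ∀ i j : Fin n, i ≠ j →
      a i + a j ≤ n * k := by
    intro a ha i j hij
    have hsa : ∑ x, a x = n * k := by
      simpa [hT, Finset.mem_piAntidiag] using ha
    calc a i + a j ≤ a i + ∑ x ∈ univ.erase i, a x := by
          refine Nat.add_le_add_left (Finset.single_le_sum (fun _ _ => Nat.zero_le _) ?_) _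
          exact Finset.mem_erase.mpr ⟨hij.symm, mem_univ j⟩
      _ = ∑ x, a x := Finset.add_sum_erase _ _ (mem_univ i)
      _ = n * k := hsa
  -- disjointness
  have hdisj : ∀ i ∈ (univ : Finset (Fin n)), ∀ j ∈ univ, i ≠ j → Disjoint (B i) (B j) := by
    intro i _ j _ hij
    rw [Finset.disjoint_left]
    intro a hai haj
    have h2 : 2 ≤ n := by
      have := Fintype.one_lt_card_iff.mpr ⟨i, j, hij⟩
      simp at this; omega
    have hkc : k ≤ c := by
      rw [hc]
      exact Nat.le_mul_of_pos_right k (by omega)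
    have hi' : c < a i := ((hBmem i a).mp hai).2
    have hj' : c < a j := ((hBmem j a).mp haj).2
    have := hsum_two a ((hBmem i a).mp hai).1 i j hij
    omega
  -- card of each bad set
  have hBcard : ∀ i : Fin n, (B i).card = (n + k - 2).choose (n - 1) := by
    intro i
    have : (B i).card = (Finset.piAntidiag (univ : Finset (Fin n)) (k - 1)).card := by
      refine Finset.card_bij' (fun a _ => Function.update a i (a i - (c + 1)))
        (fun b _ => Function.update b i (b i + (c + 1))) ?_ ?_ ?_ ?_
      · intro a ha
        obtain ⟨haT, hai⟩ := (hBmem i a).mp ha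
        rw [hT, Finset.mem_piAntidiag] at haT
        obtain ⟨hsa, -⟩ := haT
        rw [Finset.mem_piAntidiag]
        refine ⟨?_, fun _ _ => mem_univ _⟩
        rw [Finset.sum_update_of_mem (mem_univ i)]
        have herase : a i + ∑ x ∈ univ \ {i}, a x = n * k := by
          rw [← hsa, Finset.sdiff_singleton_eq_erase]
          exact Finset.add_sum_erase _ _ (mem_univ i)
        omega
      · intro b hb
        rw [Finset.mem_piAntidiag] at hb
        obtain ⟨hsb, -⟩ := hb
        rw [hBmem]
        constructor
        · rw [hT, Finset.mem_piAntidiag]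
          refine ⟨?_, fun _ _ => mem_univ _⟩
          rw [Finset.sum_update_of_mem (mem_univ i)]
          have herase : b i + ∑ x ∈ univ \ {i}, b x = k - 1 := by
            rw [← hsb, Finset.sdiff_singleton_eq_erase]
            exact Finset.add_sum_erase _ _ (mem_univ i)
          omega
        · simp only [Function.update_self]
          omega
      · intro a ha
        obtain ⟨-, hai⟩ := (hBmem i a).mp ha
        simp only [Function.update_self, Function.update_idem]
        have : a i - (c + 1) + (c + 1) = a i := by omega
        rw [this, Function.update_eq_self]
      · intro b hb
        simp only [Function.update_self, Function.update_idem]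
        have : b i + (c + 1) - (c + 1) = b i := by omega
        rw [this, Function.update_eq_self]
    rw [this, card_piAntidiag_univ_fin]
    have h1 : n + (k - 1) - 1 = n + k - 2 := by omega
    rw [h1]
    have h2 : k - 1 ≤ n + k - 2 := by omega
    have := Nat.choose_symm h2
    have h3 : n + k - 2 - (k - 1) = n - 1 := by omega
    rw [h3] at this
    exact this.symm
  have hTcard : T.card = (n * (k + 1) - 1).choose (n - 1) := by
    rw [hT, card_piAntidiag_univ_fin]
    have h1 : n + n * k - 1 = n * (k + 1) - 1 := by
      have : n * (k + 1) = n * k + n := by ring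
      omega
    rw [h1]
    have h2 : n - 1 ≤ n * (k + 1) - 1 := by
      have : n ≤ n * (k + 1) := Nat.le_mul_of_pos_right n (by omega)
      omega
    have := Nat.choose_symm h2
    have h3 : n * (k + 1) - 1 - (n - 1) = n * k := by
      have : n * (k + 1) = n * k + n := by ring
      omega
    rw [h3] at this
    exact this
  -- good + bad = total
  have hsplit : ((T.filter (fun a => ∀ i, a i ≤ c)).card)
      + (T.filter (fun a => ¬ ∀ i, a i ≤ c)).card = T.card :=
    Finset.card_filter_add_card_filter_not _
  have hbad : T.filter (fun a => ¬ ∀ i, a i ≤ c) = univ.biUnion B := by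
    ext a
    simp only [Finset.mem_filter, Finset.mem_biUnion, hB, mem_univ, true_and, not_forall,
      not_le, exists_and_left]
  have hbadcard : (T.filter (fun a => ¬ ∀ i, a i ≤ c)).card
      = n * ((n + k - 2).choose (n - 1)) := by
    rw [hbad, Finset.card_biUnion hdisj]
    simp [hBcard, mul_comm]
  rw [hbadcard, hTcard] at hsplit
  exact hsplit

/-- For n ≥ 1, k ≥ 1, the number of tuples of naturals with sum n·k and each entry
≤ k(n-1) equals C(n(k+1)-1, n-1) - n·C(n+k-2, n-1). -/
theorem stmt_4 (n k : ℕ) (hn : 1 ≤ n) (hk : 1 ≤ k) :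
    (Nat.card {a : Fin n → ℕ // (∑ i, a i = n * k) ∧ ∀ i, a i ≤ k * (n - 1)} : ℤ) =
      ((n * (k + 1) - 1).choose (n - 1) : ℤ) - n * ((n + k - 2).choose (n - 1)) := by
  classical
  have hcard : Nat.card {a : Fin n → ℕ // (∑ i, a i = n * k) ∧ ∀ i, a i ≤ k * (n - 1)}
      = ((Finset.piAntidiag (univ : Finset (Fin n)) (n * k)).filter
          (fun a => ∀ i, a i ≤ k * (n - 1))).card := by
    rw [← Nat.card_eq_finsetCard]
    apply Nat.card_congr
    apply Equiv.subtypeEquivRight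
    intro a
    simp [Finset.mem_piAntidiag]
  have := key_count n k hn hk
  rw [hcard]
  push_cast [← this]
  ring
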